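/- arXiv:2402.03201 — 4 statements merged into one kernel-verified Lean document; each statement's English description precedes it below -/
import Mathlib

section
/- Let f : ℝ^n → ℝ be a β-strongly convex function (β > 0) and let x be a random vector in ℝ^n distributed as a multivariate Gaussian N(μ, Σ) with positive-definite covariance Σ, and assume f is integrable with respect to this Gaussian measure. Write Σ = Pᵀ Λ P via the spectral theorem, where P is orthogonal and Λ is diagonal with positive diagonal entries λ₁, …, λ_n. Then the Jensen gap satisfies E[f(x)] − f(E[x]) ≥ (β/2) · Σ_{i=1}^n λᵢ, i.e. E[f(x)] − f(μ) ≥ (β/2) · tr(Σ). -/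
open MeasureTheory ProbabilityTheory

section auxiliary
open Real
open scoped ENNReal NNReal


noncomputable def sgd (x : ℝ) : ℝ := (√(2*π))⁻¹ * rexp (-(1/2) * x^2)

lemma sgd_nonneg (x : ℝ) : 0 ≤ sgd x := by unfold sgd; positivity

lemma stdgauss_pdf (x : ℝ) : gaussianPDFReal 0 1 x = sgd x := by
  unfold sgd
  rw [gaussianPDFReal]
  push_cast
  norm_num
  left
  congr 1
  ring

lemma stdgauss_eq : gaussianReal 0 1 = volume.withDensity (fun x => ENNReal.ofReal (sgd x)) := by
  rw [gaussianReal_of_var_ne_zero 0 one_ne_zero]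
  congr 1
  ext x
  simp only [gaussianPDF_def, stdgauss_pdf]

lemma sgd_meas : Measurable (fun x : ℝ => (sgd x).toNNReal) := by
  apply Measurable.real_toNNReal
  exact (measurable_const.mul ((measurable_id.pow_const 2).const_mul _).exp)

lemma integral_stdgauss (f : ℝ → ℝ) :
    ∫ x, f x ∂(gaussianReal 0 1) = ∫ x, sgd x * f x := by
  rw [stdgauss_eq]
  have h := integral_withDensity_eq_integral_smul (μ := volume) sgd_meas f
  rw [show (fun x : ℝ => ENNReal.ofReal (sgd x))
      = fun x : ℝ => (((sgd x).toNNReal : ℝ≥0) : ℝ≥0∞) from rfl]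
  rw [h]
  congr 1; ext x
  rw [NNReal.smul_def, smul_eq_mul, Real.coe_toNNReal _ (sgd_nonneg x)]

lemma integrable_stdgauss (f : ℝ → ℝ) :
    Integrable f (gaussianReal 0 1) ↔ Integrable (fun x => sgd x * f x) volume := by
  rw [stdgauss_eq]
  rw [show (fun x : ℝ => ENNReal.ofReal (sgd x))
      = fun x : ℝ => (((sgd x).toNNReal : ℝ≥0) : ℝ≥0∞) from rfl]
  rw [integrable_withDensity_iff_integrable_smul sgd_meas]
  apply integrable_congr
  filter_upwards with x
  rw [NNReal.smul_def, smul_eq_mul, Real.coe_toNNReal _ (sgd_nonneg x)]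

lemma int_sgd_mul_id : Integrable (fun x => sgd x * x) volume := by
  have h := (integrable_mul_exp_neg_mul_sq (by norm_num : (0:ℝ) < 1/2)).const_mul (√(2*π))⁻¹
  apply h.congr
  filter_upwards with x
  unfold sgd; ring

lemma int_sgd_mul_sq : Integrable (fun x => sgd x * x^2) volume := by
  have h := (integrable_rpow_mul_exp_neg_mul_sq (by norm_num : (0:ℝ) < 1/2)
    (by norm_num : (-1:ℝ) < 2)).const_mul (√(2*π))⁻¹
  apply h.congr
  filter_upwards with x
  rw [show ((2:ℝ)) = ((2:ℕ):ℝ) by norm_num, Real.rpow_natCast]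
  unfold sgd; push_cast; ring

lemma eval_sgd_id : ∫ x, sgd x * x = 0 := by
  have h := integral_neg_eq_self (fun x => sgd x * x) volume
  have h2 : (fun x : ℝ => sgd (-x) * (-x)) = fun x => -(sgd x * x) := by
    ext x; unfold sgd; rw [neg_sq]; ring
  rw [h2] at h
  rw [integral_neg] at h
  linarith

lemma eval_sq_exp : ∫ x : ℝ, x^2 * rexp (-(1/2) * x^2) = √(2*π) := by
  have h1 : ∫ x : ℝ, x^2 * rexp (-(1/2) * x^2)
      = ∫ x : ℝ, (fun t => t^2 * rexp (-(1/2) * t^2)) |x| := by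
    congr 1; ext x; simp [sq_abs]
  rw [h1]
  rw [integral_comp_abs (f := fun t => t^2 * rexp (-(1/2) * t^2))]
  have h2 : ∫ x in Set.Ioi (0:ℝ), x^2 * rexp (-(1/2) * x^2)
      = ∫ x in Set.Ioi (0:ℝ), x ^ (2:ℝ) * rexp (-(1/2) * x ^ (2:ℝ)) := by
    congr 1; ext x
    rw [show ((2:ℝ)) = ((2:ℕ):ℝ) by norm_num, Real.rpow_natCast]
  rw [h2, integral_rpow_mul_exp_neg_mul_rpow (by norm_num) (by norm_num)
    (by norm_num : (0:ℝ) < 1/2)]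
  have hG : Real.Gamma ((2+1)/2) = (1/2) * √π := by
    rw [show ((2+1)/2 : ℝ) = 1/2 + 1 by norm_num, Real.Gamma_add_one (by norm_num),
      Real.Gamma_one_half_eq]
  rw [hG]
  have hb : ((1/2 : ℝ)) ^ (-(2+1)/2 : ℝ) = 2 * √2 := by
    rw [one_div, Real.inv_rpow (by norm_num), ← Real.rpow_neg (by norm_num), neg_div, neg_neg]
    rw [show ((2+1)/2 : ℝ) = 1 + 1/2 by norm_num, Real.rpow_add (by norm_num), Real.rpow_one,
      ← Real.sqrt_eq_rpow]
  rw [hb]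
  rw [Real.sqrt_mul (by norm_num)]
  have h3 : √2 * √2 = 2 := Real.mul_self_sqrt (by norm_num)
  nlinarith [Real.sq_sqrt (le_of_lt Real.pi_pos), Real.sqrt_nonneg π, Real.sqrt_nonneg 2]

lemma eval_sgd_sq : ∫ x, sgd x * x^2 = 1 := by
  have h1 : ∫ x, sgd x * x^2 = (√(2*π))⁻¹ * ∫ x : ℝ, x^2 * rexp (-(1/2) * x^2) := by
    rw [← integral_const_mul]
    congr 1; ext x; unfold sgd; ring
  rw [h1, eval_sq_exp, inv_mul_cancel₀]
  positivity

lemma g_int_id : Integrable (fun x : ℝ => x) (gaussianReal 0 1) :=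
  (integrable_stdgauss _).2 int_sgd_mul_id

lemma g_int_sq : Integrable (fun x : ℝ => x^2) (gaussianReal 0 1) :=
  (integrable_stdgauss _).2 int_sgd_mul_sq

lemma g_eval_id : ∫ x, x ∂(gaussianReal 0 1) = 0 := by
  rw [integral_stdgauss]; exact eval_sgd_id

lemma g_eval_sq : ∫ x, x^2 ∂(gaussianReal 0 1) = 1 := by
  rw [integral_stdgauss]; exact eval_sgd_sq

lemma pi_map_eval {ι : Type*} [Fintype ι] [DecidableEq ι] {α : ι → Type*}
    [∀ i, MeasurableSpace (α i)]
    (μ : ∀ i, Measure (α i)) [∀ i, IsProbabilityMeasure (μ i)] (i : ι) :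
    (Measure.pi μ).map (fun x => x i) = μ i := by
  ext s hs
  rw [Measure.map_apply (measurable_pi_apply i) hs]
  have h1 : (fun x : ∀ j, α j => x i) ⁻¹' s
      = Set.pi Set.univ (Function.update (fun j => (Set.univ : Set (α j))) i s) := by
    ext x
    simp only [Set.mem_preimage, Set.mem_pi, Set.mem_univ, true_implies]
    constructor
    · intro hx j
      rcases eq_or_ne j i with rfl | hj
      · simpa using hx
      · simp [Function.update_of_ne hj]
    · intro hx
      simpa using hx i
  rw [h1, Measure.pi_pi]
  rw [Finset.prod_eq_single i (fun j _ hj => by simp [Function.update_of_ne hj]) (by simp)]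
  simp

lemma integral_pi_prod {n : ℕ} (μ : Measure ℝ) [IsProbabilityMeasure μ] (f : Fin n → ℝ → ℝ) :
    ∫ x : Fin n → ℝ, ∏ i, f i (x i) ∂(Measure.pi fun _ => μ) = ∏ i, ∫ x, f i x ∂μ := by
  letI : MeasureSpace ℝ := ⟨μ⟩
  haveI : SigmaFinite (volume : Measure ℝ) := by
    change SigmaFinite μ; infer_instance
  exact MeasureTheory.integral_fintype_prod_eq_prod f

section gamma

variable {n : ℕ}

local notation "γ" => (Measure.pi fun _ : Fin n => gaussianReal 0 1)

lemma γ_int_eval (i : Fin n) : Integrable (fun x : Fin n → ℝ => x i) γ := by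
  have h := g_int_id
  rw [← pi_map_eval (fun _ : Fin n => gaussianReal 0 1) i] at h
  exact (integrable_map_measure measurable_id.aestronglyMeasurable
    (measurable_pi_apply i).aemeasurable).1 h

lemma γ_int_sq (i : Fin n) : Integrable (fun x : Fin n → ℝ => (x i)^2) γ := by
  have h := g_int_sq
  rw [← pi_map_eval (fun _ : Fin n => gaussianReal 0 1) i] at h
  exact (integrable_map_measure (measurable_id.pow_const 2).aestronglyMeasurable
    (measurable_pi_apply i).aemeasurable).1 h

lemma γ_eval_id (i : Fin n) : ∫ x : Fin n → ℝ, x i ∂γ = 0 := by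
  have h := integral_map (μ := γ) (measurable_pi_apply i).aemeasurable
    (f := fun t : ℝ => t) measurable_id.aestronglyMeasurable
  rw [pi_map_eval (fun _ : Fin n => gaussianReal 0 1) i] at h
  rw [← h]
  exact g_eval_id

lemma γ_eval_sq (i : Fin n) : ∫ x : Fin n → ℝ, (x i)^2 ∂γ = 1 := by
  have h := integral_map (μ := γ) (measurable_pi_apply i).aemeasurable
    (f := fun t : ℝ => t^2) (measurable_id.pow_const 2).aestronglyMeasurable
  rw [pi_map_eval (fun _ : Fin n => gaussianReal 0 1) i] at h
  rw [← h]
  exact g_eval_sq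

lemma γ_int_mul (i j : Fin n) : Integrable (fun x : Fin n → ℝ => x i * x j) γ := by
  refine Integrable.mono' (((γ_int_sq i).add (γ_int_sq j)).div_const 2)
    ((measurable_pi_apply i).mul (measurable_pi_apply j)).aestronglyMeasurable ?_
  filter_upwards with x
  rw [Real.norm_eq_abs, abs_mul]
  simp only [Pi.add_apply]
  nlinarith [sq_nonneg (|x i| - |x j|), sq_abs (x i), sq_abs (x j), abs_nonneg (x i),
    abs_nonneg (x j)]

lemma γ_eval_mul (i j : Fin n) (hij : i ≠ j) : ∫ x : Fin n → ℝ, x i * x j ∂γ = 0 := by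
  classical
  set f : Fin n → ℝ → ℝ := fun k t => if k = i then t else if k = j then t else 1 with hf
  have hpt : ∀ x : Fin n → ℝ, x i * x j = ∏ k, f k (x k) := by
    intro x
    rw [← Finset.prod_filter_mul_prod_filter_not Finset.univ (fun k => k = i ∨ k = j)]
    have h1 : Finset.univ.filter (fun k => k = i ∨ k = j) = {i, j} := by
      ext k; simp [Finset.mem_filter, Finset.mem_insert]
    rw [h1, Finset.prod_pair hij]
    have h2 : ∏ k ∈ Finset.univ.filter (fun k => ¬(k = i ∨ k = j)), f k (x k) = 1 := by
      apply Finset.prod_eq_one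
      intro k hk
      simp only [Finset.mem_filter] at hk
      push_neg at hk
      simp [hf, hk.2.1, hk.2.2]
    rw [h2, mul_one]
    simp [hf, hij.symm]
  have h3 : ∫ x : Fin n → ℝ, x i * x j ∂γ = ∏ k, ∫ t, f k t ∂(gaussianReal 0 1) := by
    rw [← integral_pi_prod]
    congr 1; ext x; exact hpt x
  rw [h3]
  apply Finset.prod_eq_zero (Finset.mem_univ i)
  simp only [hf, if_pos rfl]
  exact g_eval_id

end gamma
end auxiliary

/-- The multivariate Gaussian measure `N(m, S)` on `EuclideanSpace ℝ (Fin n)`, defined as the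
pushforward of the standard Gaussian product measure under `x ↦ m + √S * x`. -/
noncomputable def multivariateGaussian {n : ℕ} (m : EuclideanSpace ℝ (Fin n))
    (S : Matrix (Fin n) (Fin n) ℝ) (hS : S.PosSemidef) :
    Measure (EuclideanSpace ℝ (Fin n)) :=
  (Measure.pi fun _ : Fin n => gaussianReal 0 1).map
    (fun x => m + (EuclideanSpace.equiv (Fin n) ℝ).symm (((hS.1.eigenvectorUnitary : Matrix (Fin n) (Fin n) ℝ) *
      Matrix.diagonal (Real.sqrt ∘ hS.1.eigenvalues) *
      (star hS.1.eigenvectorUnitary : Matrix (Fin n) (Fin n) ℝ)).mulVec x))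

set_option maxHeartbeats 1000000 in
/-- Lower bound for the Jensen gap: if `f` is `β`-strongly convex and `x ~ N(m, S)` with `S`
positive definite, then `E[f(x)] - f(m) ≥ (β/2) · tr(S)`. -/
theorem jensen_gap_lower_bound {n : ℕ} (β : ℝ) (hβ : 0 < β)
    (f : EuclideanSpace ℝ (Fin n) → ℝ)
    (hconv : ∀ x₁ x₂ : EuclideanSpace ℝ (Fin n), ∀ t : ℝ, t ∈ Set.Icc (0 : ℝ) 1 →
      f (t • x₁ + (1 - t) • x₂) ≤ t * f x₁ + (1 - t) * f x₂
        - β / 2 * (t * (1 - t)) * ‖x₁ - x₂‖ ^ 2)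
    (m : EuclideanSpace ℝ (Fin n)) (S : Matrix (Fin n) (Fin n) ℝ) (hS : S.PosDef)
    (hint : Integrable f (multivariateGaussian m S hS.posSemidef)) :
    β / 2 * S.trace ≤ (∫ x, f x ∂(multivariateGaussian m S hS.posSemidef)) - f m := by
  classical
  set A := ((hS.posSemidef.1.eigenvectorUnitary : Matrix (Fin n) (Fin n) ℝ) *
      Matrix.diagonal (Real.sqrt ∘ hS.posSemidef.1.eigenvalues) *
      (star hS.posSemidef.1.eigenvectorUnitary : Matrix (Fin n) (Fin n) ℝ)) with hAdef
  have hAA : A * A = S := by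
    have hspec := hS.posSemidef.1.spectral_theorem
    rw [Unitary.conjStarAlgAut_apply] at hspec
    conv_rhs => rw [hspec]
    have hU : (star hS.posSemidef.1.eigenvectorUnitary : Matrix (Fin n) (Fin n) ℝ) *
        (hS.posSemidef.1.eigenvectorUnitary : Matrix (Fin n) (Fin n) ℝ) = 1 :=
      Unitary.coe_star_mul_self _
    have hD : Matrix.diagonal (Real.sqrt ∘ hS.posSemidef.1.eigenvalues) *
        Matrix.diagonal (Real.sqrt ∘ hS.posSemidef.1.eigenvalues)
        = Matrix.diagonal (RCLike.ofReal ∘ hS.posSemidef.1.eigenvalues) := by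
      rw [Matrix.diagonal_mul_diagonal]
      congr 1; funext i
      simp [Real.mul_self_sqrt (hS.posSemidef.eigenvalues_nonneg i)]
    rw [hAdef]
    simp only [Matrix.mul_assoc]
    rw [← Matrix.mul_assoc _ _ (Matrix.diagonal _ * _), hU, Matrix.one_mul,
      ← Matrix.mul_assoc (Matrix.diagonal _), hD]
  have hAsymm : ∀ i j, A i j = A j i := by
    intro i j
    have h : A.IsHermitian := by
      rw [hAdef, Matrix.IsHermitian, Matrix.conjTranspose_mul, Matrix.conjTranspose_mul,
        Matrix.diagonal_conjTranspose, ← Matrix.star_eq_conjTranspose, ← Matrix.star_eq_conjTranspose,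
        star_star]
      simp [Matrix.mul_assoc]
    have h2 := congrFun (congrFun h.eq j) i
    simpa [Matrix.conjTranspose_apply] using h2
  set γ := (Measure.pi fun _ : Fin n => gaussianReal 0 1) with hγdef
  set T : (Fin n → ℝ) → EuclideanSpace ℝ (Fin n) :=
    fun x => m + (EuclideanSpace.equiv (Fin n) ℝ).symm (A.mulVec x) with hTdef
  have hν : multivariateGaussian m S hS.posSemidef = γ.map T := rfl
  have hmvc : Continuous fun x : Fin n → ℝ => A.mulVec x := by
    apply continuous_pi; intro i
    simp only [Matrix.mulVec, dotProduct]
    exact continuous_finset_sum _ fun j _ => continuous_const.mul (continuous_apply j)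
  have hTcont : Continuous T :=
    continuous_const.add (((EuclideanSpace.equiv (Fin n) ℝ).symm.continuous).comp hmvc)
  have hTmeas : AEMeasurable T γ := hTcont.measurable.aemeasurable
  haveI : IsProbabilityMeasure (γ.map T) := Measure.isProbabilityMeasure_map hTmeas
  set L : (Fin n → ℝ) →L[ℝ] EuclideanSpace ℝ (Fin n) :=
    LinearMap.toContinuousLinearMap
      ((((EuclideanSpace.equiv (Fin n) ℝ).symm :
          (Fin n → ℝ) ≃L[ℝ] EuclideanSpace ℝ (Fin n)).toLinearEquiv.toLinearMap).comp
        A.mulVecLin) with hLdef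
  have hL : ∀ x, L x = (EuclideanSpace.equiv (Fin n) ℝ).symm (A.mulVec x) := fun x => rfl
  have hidint : Integrable (fun x : Fin n → ℝ => x) γ := by
    refine Integrable.mono' (g := fun x => ∑ i, |x i|)
      (integrable_finset_sum _ fun i _ => (γ_int_eval i).abs) aestronglyMeasurable_id ?_
    filter_upwards with x
    refine (pi_norm_le_iff_of_nonneg (Finset.sum_nonneg fun i _ => abs_nonneg _)).2 fun i => ?_
    rw [Real.norm_eq_abs]
    exact Finset.single_le_sum (fun j _ => abs_nonneg (x j)) (Finset.mem_univ i)
  have hLint : Integrable (fun x => L x) γ := L.integrable_comp hidint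
  have hTint : Integrable T γ := by
    have hTeq : T = fun x => m + L x := rfl
    rw [hTeq]
    exact (integrable_const m).add hLint
  have hmean0 : (∫ x : Fin n → ℝ, x ∂γ) = 0 := by
    funext i
    have h := (ContinuousLinearMap.proj (R := ℝ) (φ := fun _ : Fin n => ℝ)
      i).integral_comp_comm hidint
    simp only [ContinuousLinearMap.proj_apply] at h
    rw [Pi.zero_apply, ← h]
    exact γ_eval_id i
  have hmeanν : (∫ y, y ∂(γ.map T)) = m := by
    rw [integral_map (f := fun y : EuclideanSpace ℝ (Fin n) => y) hTmeas
      (by exact aestronglyMeasurable_id)]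
    have hTeq : T = fun x => m + L x := rfl
    rw [hTeq]
    rw [integral_add (integrable_const m) hLint, integral_const, probReal_univ,
      one_smul, L.integral_comp_comm hidint, hmean0, map_zero, add_zero]
  have hnormsq : ∀ y : EuclideanSpace ℝ (Fin n), ‖y‖^2 = ∑ i, (y i)^2 := by
    intro y
    rw [EuclideanSpace.norm_eq, Real.sq_sqrt (Finset.sum_nonneg fun i _ => sq_nonneg _)]
    simp [Real.norm_eq_abs, sq_abs]
  have hexp : ∀ x : Fin n → ℝ, ‖T x‖^2
      = ∑ i, ((m i)^2 + (∑ j, (2 * m i * A i j) * x j)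
          + ∑ j, ∑ k, (A i j * A i k) * (x j * x k)) := by
    intro x
    rw [hnormsq]
    refine Finset.sum_congr rfl fun i _ => ?_
    have hTc : T x i = m i + ∑ j, A i j * x j := by
      show m i + (A.mulVec x) i = _
      simp [Matrix.mulVec, dotProduct]
    rw [hTc, add_sq]
    have e1 : 2 * (m i) * (∑ j, A i j * x j) = ∑ j, (2 * m i * A i j) * x j := by
      rw [Finset.mul_sum]; exact Finset.sum_congr rfl fun j _ => by ring
    have e2 : (∑ j, A i j * x j)^2 = ∑ j, ∑ k, (A i j * A i k) * (x j * x k) := by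
      rw [sq, Finset.sum_mul_sum]
      exact Finset.sum_congr rfl fun j _ => Finset.sum_congr rfl fun k _ => by ring
    rw [e1, e2]
  have hterm_int : ∀ i : Fin n, Integrable (fun x : Fin n → ℝ =>
      (m i)^2 + (∑ j, (2 * m i * A i j) * x j)
        + ∑ j, ∑ k, (A i j * A i k) * (x j * x k)) γ :=
    fun i => ((integrable_const _).add (integrable_finset_sum _ fun j _ =>
      (γ_int_eval j).const_mul _)).add (integrable_finset_sum _ fun j _ =>
        integrable_finset_sum _ fun k _ => (γ_int_mul j k).const_mul _)
  have hnsq_int : Integrable (fun x => ‖T x‖^2) γ := by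
    have h := integrable_finset_sum (μ := γ) Finset.univ (fun i _ => hterm_int i)
    exact h.congr (by filter_upwards with x; exact (hexp x).symm)
  have hδ : ∀ j k : Fin n, ∫ x : Fin n → ℝ, x j * x k ∂γ = if j = k then 1 else 0 := by
    intro j k
    rcases eq_or_ne j k with rfl | hjk
    · simp only [if_pos rfl]
      have h := γ_eval_sq (n := n) j
      rw [← h]
      congr 1; ext x; ring
    · rw [if_neg hjk]; exact γ_eval_mul j k hjk
  have htrace : ∑ i, ∑ j, A i j * A i j = S.trace := by
    rw [← hAA, Matrix.trace]
    rw [Finset.sum_comm]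
    refine Finset.sum_congr rfl fun k _ => ?_
    rw [Matrix.diag_apply, Matrix.mul_apply]
    refine Finset.sum_congr rfl fun i _ => ?_
    rw [hAsymm i k]
  have hsecond : ∫ x, ‖T x‖^2 ∂γ = ‖m‖^2 + S.trace := by
    have h1 : ∫ x, ‖T x‖^2 ∂γ = ∑ i, ((m i)^2 + ∑ j, A i j * A i j) := by
      calc ∫ x, ‖T x‖^2 ∂γ
          = ∫ x, ∑ i, ((m i)^2 + (∑ j, (2 * m i * A i j) * x j)
            + ∑ j, ∑ k, (A i j * A i k) * (x j * x k)) ∂γ := by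
            congr 1; ext x; exact hexp x
        _ = ∑ i, ∫ x, ((m i)^2 + (∑ j, (2 * m i * A i j) * x j)
            + ∑ j, ∑ k, (A i j * A i k) * (x j * x k)) ∂γ :=
            integral_finset_sum _ fun i _ => hterm_int i
        _ = ∑ i, ((m i)^2 + ∑ j, A i j * A i j) := by
            refine Finset.sum_congr rfl fun i _ => ?_
            have I0 : Integrable (fun _ : Fin n → ℝ => (m i)^2) γ := integrable_const _
            have I1 : Integrable (fun x : Fin n → ℝ => ∑ j, (2 * m i * A i j) * x j) γ :=
              integrable_finset_sum _ fun j _ => (γ_int_eval j).const_mul _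
            have I2 : Integrable (fun x : Fin n → ℝ =>
                ∑ j, ∑ k, (A i j * A i k) * (x j * x k)) γ :=
              integrable_finset_sum _ fun j _ => integrable_finset_sum _ fun k _ =>
                (γ_int_mul j k).const_mul _
            have I01 : Integrable (fun x : Fin n → ℝ =>
                (m i)^2 + ∑ j, (2 * m i * A i j) * x j) γ := I0.add I1
            rw [integral_add I01 I2, integral_add I0 I1,
              integral_const, probReal_univ, one_smul,
              integral_finset_sum _ (fun j _ => (γ_int_eval j).const_mul _),
              integral_finset_sum _ (fun j _ => integrable_finset_sum _ fun k _ =>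
                (γ_int_mul j k).const_mul _)]
            have hz : ∑ j, ∫ x : Fin n → ℝ, (2 * m i * A i j) * x j ∂γ = 0 := by
              refine Finset.sum_eq_zero fun j _ => ?_
              rw [integral_const_mul, γ_eval_id, mul_zero]
            have hd : ∑ j, ∫ x : Fin n → ℝ, (∑ k, (A i j * A i k) * (x j * x k)) ∂γ
                = ∑ j, A i j * A i j := by
              refine Finset.sum_congr rfl fun j _ => ?_
              rw [integral_finset_sum _ (fun k _ => (γ_int_mul j k).const_mul _)]
              have hpt : ∀ k, ∫ x : Fin n → ℝ, (A i j * A i k) * (x j * x k) ∂γ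
                  = (A i j * A i k) * (if j = k then 1 else 0) := by
                intro k; rw [integral_const_mul, hδ]
              rw [Finset.sum_congr rfl fun k _ => hpt k, Finset.sum_eq_single j
                (fun k _ hk => by rw [if_neg (Ne.symm hk), mul_zero]) (by simp), if_pos rfl, mul_one]
            rw [hz, hd, add_zero]
    rw [h1, Finset.sum_add_distrib, htrace, hnormsq m]
  have hν2_int : Integrable (fun y : EuclideanSpace ℝ (Fin n) => ‖y‖^2) (γ.map T) :=
    (integrable_map_measure (continuous_norm.pow 2).aestronglyMeasurable hTmeas).2 hnsq_int
  have hν2 : ∫ y, ‖y‖^2 ∂(γ.map T) = ‖m‖^2 + S.trace := by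
    rw [integral_map (f := fun y : EuclideanSpace ℝ (Fin n) => ‖y‖^2) hTmeas
      (continuous_norm.pow 2).aestronglyMeasurable]
    exact hsecond
  have hidintν : Integrable (fun y : EuclideanSpace ℝ (Fin n) => y) (γ.map T) :=
    (integrable_map_measure aestronglyMeasurable_id hTmeas).2 hTint
  have hint' : Integrable f (γ.map T) := by rw [← hν]; exact hint
  set g : EuclideanSpace ℝ (Fin n) → ℝ := fun y => f y - β/2 * ‖y‖^2 with hgdef
  have hgconv : ConvexOn ℝ Set.univ g := by
    refine ⟨convex_univ, ?_⟩
    intro x hx y hy a b ha hb hab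
    have hb' : b = 1 - a := by linarith
    subst hb'
    have ht := hconv x y a ⟨ha, by linarith⟩
    have hinner1 : ‖a • x + (1-a) • y‖^2
        = a^2 * ‖x‖^2 + 2*(a*(1-a))*(inner ℝ x y : ℝ) + (1-a)^2 * ‖y‖^2 := by
      rw [norm_add_sq_real, norm_smul, norm_smul, real_inner_smul_left, real_inner_smul_right]
      rw [mul_pow, mul_pow, Real.norm_eq_abs, Real.norm_eq_abs, sq_abs, sq_abs]
      ring
    have hinner2 : ‖x - y‖^2 = ‖x‖^2 - 2*(inner ℝ x y : ℝ) + ‖y‖^2 := by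
      rw [norm_sub_sq_real]
    have key : β / 2 * (a * (1 - a)) * ‖x - y‖^2
        = a * (β/2 * ‖x‖^2) + (1-a) * (β/2 * ‖y‖^2) - β/2 * ‖a • x + (1-a) • y‖^2 := by
      rw [hinner1, hinner2]; ring
    show f (a • x + (1-a) • y) - β/2 * ‖a • x + (1-a) • y‖^2
        ≤ a • (f x - β/2 * ‖x‖^2) + (1-a) • (f y - β/2 * ‖y‖^2)
    rw [smul_eq_mul, smul_eq_mul]
    linarith [ht, key]
  have hgcont : ContinuousOn g Set.univ := hgconv.continuousOn isOpen_univ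
  have hgintν : Integrable g (γ.map T) := hint'.sub (hν2_int.const_mul (β/2))
  have jensen := hgconv.map_integral_le (f := fun y => y) hgcont isClosed_univ
    (Filter.Eventually.of_forall fun x => Set.mem_univ _) hidintν (by exact hgintν)
  rw [hmeanν] at jensen
  have hsplit : ∫ y, g y ∂(γ.map T) = (∫ y, f y ∂(γ.map T)) - β/2 * (‖m‖^2 + S.trace) := by
    simp only [hgdef]
    rw [integral_sub hint' (hν2_int.const_mul (β/2)), integral_const_mul, hν2]
  rw [hsplit] at jensen
  simp only [hgdef] at jensen
  rw [hν]
  have hexpand : β/2 * (‖m‖^2 + S.trace) = β/2*‖m‖^2 + β/2*S.trace := by ring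
  linarith
end

section
/- Let x be a random vector in ℝ^n whose coordinates are independent Gaussian random variables, each with mean μᵢ and variance σ² > 0 (i.e. x ~ N(μ, σ²·I) is an isotropic Gaussian). Then for every ε ≥ 0, P(‖x − μ‖² ≥ nσ² + 2nσ²(√ε + ε)) ≤ e^{−nε}. -/
open MeasureTheory ProbabilityTheory Real

lemma gauss_sq_exp {m σ t : ℝ} (hσ : 0 < σ) (ht : 2 * t * σ ^ 2 < 1) :
    Integrable (fun x => rexp (t * (x - m) ^ 2)) (gaussianReal m ⟨σ ^ 2, sq_nonneg σ⟩) ∧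
    ∫ x, rexp (t * (x - m) ^ 2) ∂(gaussianReal m ⟨σ ^ 2, sq_nonneg σ⟩)
      = Real.sqrt (1 - 2 * t * σ ^ 2)⁻¹ := by
  set v : NNReal := ⟨σ ^ 2, sq_nonneg σ⟩ with hvdef
  have hσ2 : (0:ℝ) < σ ^ 2 := by positivity
  have hv : v ≠ 0 := by
    intro h
    have : (v : ℝ) = 0 := by simp [h]
    rw [hvdef] at this
    change σ ^ 2 = 0 at this
    linarith
  have h2σ : (0:ℝ) < 2 * σ ^ 2 := by positivity
  have hb : 0 < (2 * σ ^ 2)⁻¹ - t := by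
    rw [sub_pos, show (2 * σ ^ 2)⁻¹ = 1 / (2 * σ ^ 2) by ring, lt_div_iff₀ h2σ]
    nlinarith
  set b : ℝ := (2 * σ ^ 2)⁻¹ - t with hbdef
  have hmeas : Measurable fun x => (gaussianPDFReal m v x).toNNReal :=
    (measurable_gaussianPDFReal m v).real_toNNReal
  have hrw : gaussianReal m v
      = volume.withDensity (fun x => ((gaussianPDFReal m v x).toNNReal : ENNReal)) := by
    rw [gaussianReal_of_var_ne_zero _ hv]; rfl
  have hpt : ∀ x, gaussianPDFReal m v x * rexp (t * (x - m) ^ 2)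
      = (Real.sqrt (2 * π * σ ^ 2))⁻¹ * rexp (-b * (x - m) ^ 2) := by
    intro x
    rw [gaussianPDFReal, mul_assoc, ← Real.exp_add]
    have hvc : (v : ℝ) = σ ^ 2 := rfl
    rw [hvc]
    congr 1
    rw [hbdef]
    field_simp
    ring
  have hint : Integrable (fun x => gaussianPDFReal m v x * rexp (t * (x - m) ^ 2)) := by
    have : Integrable (fun x : ℝ =>
        (Real.sqrt (2 * π * σ ^ 2))⁻¹ * rexp (-b * (x - m) ^ 2)) :=
      (((integrable_exp_neg_mul_sq hb).comp_sub_right m).const_mul _)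
    exact this.congr (Filter.Eventually.of_forall fun x => (hpt x).symm)
  have hsmul : ∀ x : ℝ, (gaussianPDFReal m v x).toNNReal • rexp (t * (x - m) ^ 2)
      = gaussianPDFReal m v x * rexp (t * (x - m) ^ 2) := by
    intro x
    rw [NNReal.smul_def, smul_eq_mul, Real.coe_toNNReal _ (gaussianPDFReal_nonneg m v x)]
  constructor
  · rw [hrw, integrable_withDensity_iff_integrable_smul hmeas]
    exact hint.congr (Filter.Eventually.of_forall fun x => (hsmul x).symm)
  · rw [hrw, integral_withDensity_eq_integral_smul hmeas]
    simp_rw [hsmul, hpt]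
    rw [integral_const_mul, integral_sub_right_eq_self (fun x => rexp (-b * x ^ 2)) m,
      integral_gaussian]
    have h2 : 2 * σ ^ 2 * b = 1 - 2 * t * σ ^ 2 := by
      rw [hbdef]; field_simp
    rw [← Real.sqrt_inv, ← Real.sqrt_mul (by positivity)]
    congr 1
    rw [← h2]
    have hb' : b ≠ 0 := ne_of_gt hb
    have hπ : (0:ℝ) ≠ π := ne_of_lt pi_pos
    field_simp

/-- The isotropic Gaussian measure `N(μ, σ²·I)` on `Fin n → ℝ`: the product of `n` independent
one-dimensional Gaussians with means `μ i` and common variance `σ²`. -/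
noncomputable def isoGaussian (n : ℕ) (μ : Fin n → ℝ) (σ : ℝ) : Measure (Fin n → ℝ) :=
  Measure.pi fun i => gaussianReal (μ i) ⟨σ ^ 2, sq_nonneg σ⟩

/-- Laurent–Massart upper-tail bound for an isotropic Gaussian: for `x ~ N(μ, σ²·I)` and
`ε ≥ 0`, `P(‖x - μ‖² ≥ nσ² + 2nσ²(√ε + ε)) ≤ e^(-nε)`. -/
theorem isoGaussian_upper_tail {n : ℕ} (μ : Fin n → ℝ) (σ : ℝ) (hσ : 0 < σ)
    (ε : ℝ) (hε : 0 ≤ ε) :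
    isoGaussian n μ σ
        {x | n * σ ^ 2 + 2 * n * σ ^ 2 * (Real.sqrt ε + ε) ≤ ∑ i, (x i - μ i) ^ 2}
      ≤ ENNReal.ofReal (Real.exp (-(n * ε))) := by
  set v : NNReal := ⟨σ ^ 2, sq_nonneg σ⟩ with hvdef
  set u : ℝ := Real.sqrt ε with hudef
  have hu : 0 ≤ u := Real.sqrt_nonneg ε
  have hu2 : u ^ 2 = ε := Real.sq_sqrt hε
  set r : ℝ := 1 + 2 * u + 2 * ε with hrdef
  have hr1 : 1 ≤ r := by nlinarith
  have hr0 : 0 < r := by linarith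
  have hσ2 : (0:ℝ) < σ ^ 2 := by positivity
  set t : ℝ := (1 - r⁻¹) / (2 * σ ^ 2) with htdef
  have hrinv1 : r⁻¹ ≤ 1 := by
    rw [inv_le_one_iff₀]; right; exact hr1
  have ht0 : 0 ≤ t := div_nonneg (by linarith) (by positivity)
  have h2t : 2 * t * σ ^ 2 = 1 - r⁻¹ := by
    rw [htdef]; field_simp
  have ht1 : 2 * t * σ ^ 2 < 1 := by
    rw [h2t]
    have : 0 < r⁻¹ := inv_pos.mpr hr0
    linarith
  have hone : 1 - 2 * t * σ ^ 2 = r⁻¹ := by rw [h2t]; ring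
  set X : (Fin n → ℝ) → ℝ := fun x => ∑ i, (x i - μ i) ^ 2 with hX
  have hint1 : ∀ i : Fin n,
      Integrable (fun y => rexp (t * (y - μ i) ^ 2)) (gaussianReal (μ i) v) :=
    fun i => (gauss_sq_exp hσ ht1).1
  have hexp : ∀ x : Fin n → ℝ, rexp (t * X x) = ∏ i, rexp (t * (x i - μ i) ^ 2) := by
    intro x
    rw [hX, Finset.mul_sum, Real.exp_sum]
  have hIntX : Integrable (fun x => rexp (t * X x)) (isoGaussian n μ σ) := by
    simp_rw [hexp]
    exact Integrable.fintype_prod_dep (E := fun _ => ℝ)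
      (f := fun i y => rexp (t * (y - μ i) ^ 2)) (μ := fun i => gaussianReal (μ i) v) hint1
  have hmgf : mgf X (isoGaussian n μ σ) t = (Real.sqrt r) ^ n := by
    rw [mgf]
    calc ∫ x, rexp (t * X x) ∂(isoGaussian n μ σ)
        = ∫ x, ∏ i, rexp (t * (x i - μ i) ^ 2) ∂(isoGaussian n μ σ) := by
          simp_rw [hexp]
      _ = ∏ i, ∫ y, rexp (t * (y - μ i) ^ 2) ∂(gaussianReal (μ i) v) :=
          integral_fintype_prod_eq_prod (E := fun _ => ℝ)
            (fun i y => rexp (t * (y - μ i) ^ 2)) (μ := fun i => gaussianReal (μ i) v)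
      _ = ∏ _i : Fin n, Real.sqrt (1 - 2 * t * σ ^ 2)⁻¹ := by
          refine Finset.prod_congr rfl fun i _ => ?_
          exact (gauss_sq_exp hσ ht1).2
      _ = (Real.sqrt r) ^ n := by
          rw [hone, inv_inv, Finset.prod_const, Finset.card_univ, Fintype.card_fin]
  haveI : IsProbabilityMeasure (isoGaussian n μ σ) := by
    unfold isoGaussian
    haveI := fun i => instIsProbabilityMeasureGaussianReal (μ i) v
    exact Measure.pi.instIsProbabilityMeasure _
  set a : ℝ := n * σ ^ 2 + 2 * n * σ ^ 2 * (u + ε) with hadef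
  have hchern := measure_ge_le_exp_mul_mgf (X := X) (μ := isoGaussian n μ σ) a ht0 hIntX
  rw [hmgf] at hchern
  have hta : -t * a = -(n * (u + ε)) := by
    rw [htdef, hadef]
    field_simp
    ring
  rw [← ENNReal.ofReal_toReal (measure_ne_top (isoGaussian n μ σ) _)]
  apply ENNReal.ofReal_le_ofReal
  refine hchern.trans ?_
  rw [hta]
  have hsq : Real.sqrt r ≤ Real.exp u := by
    have h := Real.quadratic_le_exp_of_nonneg (x := 2 * u) (by linarith)
    have he : Real.exp (2 * u) = Real.exp u ^ 2 := by
      rw [two_mul, Real.exp_add, sq]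
    have hru : r ≤ Real.exp u ^ 2 := by nlinarith
    exact (Real.sqrt_le_sqrt hru).trans_eq (Real.sqrt_sq (Real.exp_pos u).le)
  have h1 : (Real.sqrt r) ^ n ≤ Real.exp u ^ n :=
    pow_le_pow_left₀ (Real.sqrt_nonneg r) hsq n
  calc Real.exp (-(n * (u + ε))) * (Real.sqrt r) ^ n
      ≤ Real.exp (-(n * (u + ε))) * Real.exp u ^ n := by
        exact mul_le_mul_of_nonneg_left h1 (Real.exp_pos _).le
    _ = Real.exp (-(n * (u + ε)) + n * u) := by
        rw [← Real.exp_nat_mul, ← Real.exp_add, mul_comm (n:ℝ) u]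
    _ = Real.exp (-(n * ε)) := by ring_nf
end

section
/- Let x be a random vector in ℝ^n whose coordinates are independent Gaussian random variables, each with mean μᵢ and variance σ² > 0 (i.e. x ~ N(μ, σ²·I) is an isotropic Gaussian). Then for every ε ≥ 0, P(‖x − μ‖² ≤ nσ² − 2nσ²√ε) ≤ e^{−nε}. -/
open MeasureTheory ProbabilityTheory

set_option maxHeartbeats 1000000

section Aux
open Real

lemma exp_quad_le (u : ℝ) (hu : 0 ≤ u) : Real.exp (u - u^2/2) ≤ 1 + u := by
  set g : ℝ → ℝ := fun t => (1 + t) * Real.exp (t^2/2 - t) with hg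
  have hderiv : ∀ t : ℝ, HasDerivAt g (t^2 * Real.exp (t^2/2 - t)) t := by
    intro t
    have h1 : HasDerivAt (fun t : ℝ => t^2/2 - t) (t - 1) t := by
      have := ((hasDerivAt_pow 2 t).div_const 2).sub (hasDerivAt_id t)
      exact this.congr_deriv (by norm_num)
    have h2 : HasDerivAt (fun t : ℝ => Real.exp (t^2/2 - t))
        ((t-1) * Real.exp (t^2/2-t)) t := by
      simpa [mul_comm] using h1.exp
    have h3 : HasDerivAt (fun t : ℝ => 1 + t) 1 t := by
      simpa using (hasDerivAt_id t).const_add 1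
    have := h3.mul h2
    refine this.congr_deriv ?_
    ring
  have hdiff : Differentiable ℝ g := fun t => (hderiv t).differentiableAt
  have hmono : MonotoneOn g (Set.Ici (0:ℝ)) := by
    apply monotoneOn_of_deriv_nonneg (convex_Ici 0) hdiff.continuous.continuousOn
      hdiff.differentiableOn
    intro t _
    rw [(hderiv t).deriv]
    positivity
  have h0 : g 0 = 1 := by simp [hg]
  have h1 : (1:ℝ) ≤ g u := by
    have := hmono Set.self_mem_Ici (Set.mem_Ici.mpr hu) hu
    rwa [h0] at this
  have hepos : 0 < Real.exp (u^2/2 - u) := Real.exp_pos _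
  have hkey : Real.exp (u - u^2/2) * Real.exp (u^2/2 - u) = 1 := by
    rw [← Real.exp_add]; ring_nf; exact Real.exp_zero
  rw [← mul_le_mul_iff_of_pos_right hepos, hkey]
  exact h1

lemma pi_integral_prod {n : ℕ} (m : Fin n → Measure ℝ) [h : ∀ i, SigmaFinite (m i)]
    (f : Fin n → ℝ → ℝ) :
    ∫ x : Fin n → ℝ, ∏ i, f i (x i) ∂Measure.pi m = ∏ i, ∫ x, f i x ∂m i :=
  MeasureTheory.integral_fin_nat_prod_eq_prod (μ := m) f


lemma gauss_exp_integral (m σ : ℝ) (hσ : 0 < σ) (l : ℝ) (hl : 0 ≤ l) :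
    ∫ y, Real.exp (-(l * (y - m)^2)) ∂gaussianReal m ⟨σ^2, sq_nonneg σ⟩
      = (Real.sqrt (1 + 2*l*σ^2))⁻¹ := by
  have hσ2 : (0:ℝ) < σ^2 := by positivity
  have hv : (⟨σ^2, sq_nonneg σ⟩ : NNReal) ≠ 0 := by
    intro h
    have h2 := congrArg (fun x : NNReal => (x : ℝ)) h
    change σ^2 = 0 at h2
    exact absurd h2 (ne_of_gt hσ2)
  rw [gaussianReal_of_var_ne_zero _ hv]; unfold gaussianPDF
  have hmeas : Measurable fun x => (gaussianPDFReal m ⟨σ^2, sq_nonneg σ⟩ x).toNNReal :=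
    (measurable_gaussianPDFReal _ _).real_toNNReal
  have hdens : (fun x => ENNReal.ofReal (gaussianPDFReal m ⟨σ^2, sq_nonneg σ⟩ x))
      = fun x => ((gaussianPDFReal m ⟨σ^2, sq_nonneg σ⟩ x).toNNReal : ENNReal) := rfl
  rw [hdens, integral_withDensity_eq_integral_smul hmeas]
  have hcoe : ((⟨σ^2, sq_nonneg σ⟩ : NNReal) : ℝ) = σ^2 := rfl
  have hb : (0:ℝ) < l + 1/(2*σ^2) := by positivity
  have step1 : ∀ y : ℝ, (gaussianPDFReal m ⟨σ^2, sq_nonneg σ⟩ y).toNNReal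
        • Real.exp (-(l * (y - m)^2))
      = (Real.sqrt (2*π*σ^2))⁻¹ * Real.exp (-(l + 1/(2*σ^2)) * (y-m)^2) := by
    intro y
    erw [NNReal.smul_def, smul_eq_mul, Real.coe_toNNReal _ (gaussianPDFReal_nonneg _ _ _),
      gaussianPDFReal]
    change (Real.sqrt (2*π*σ^2))⁻¹ * Real.exp (-(y - m) ^ 2 / (2 * σ^2))
      * Real.exp (-(l * (y - m) ^ 2)) = _
    rw [mul_assoc, ← Real.exp_add]
    congr 1
    field_simp
    ring
  simp_rw [step1]
  rw [integral_const_mul]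
  have step2 : ∫ y : ℝ, Real.exp (-(l + 1/(2*σ^2)) * (y-m)^2)
      = Real.sqrt (π / (l + 1/(2*σ^2))) := by
    rw [← integral_gaussian (l + 1/(2*σ^2))]
    exact integral_sub_right_eq_self (fun y => Real.exp (-(l + 1/(2*σ^2)) * y^2)) m
  rw [step2]
  have h1 : (0:ℝ) < 1 + 2*l*σ^2 := by positivity
  have hrw : π / (l + 1/(2*σ^2)) = (2*π*σ^2) / (1 + 2*l*σ^2) := by
    field_simp
    ring
  rw [hrw, Real.sqrt_div (by positivity : (0:ℝ) ≤ 2*π*σ^2)]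
  have hs : Real.sqrt (2*π*σ^2) ≠ 0 := ne_of_gt (Real.sqrt_pos.mpr (by positivity))
  field_simp

end Aux

/-- Laurent–Massart lower-tail bound for an isotropic Gaussian: for `x ~ N(μ, σ²·I)` and
`ε ≥ 0`, `P(‖x - μ‖² ≤ nσ² - 2nσ²√ε) ≤ e^(-nε)`. -/
theorem isoGaussian_lower_tail {n : ℕ} (μ : Fin n → ℝ) (σ : ℝ) (hσ : 0 < σ)
    (ε : ℝ) (hε : 0 ≤ ε) :
    isoGaussian n μ σ
        {x | ∑ i, (x i - μ i) ^ 2 ≤ n * σ ^ 2 - 2 * n * σ ^ 2 * Real.sqrt ε}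
      ≤ ENNReal.ofReal (Real.exp (-(n * ε))) := by
  have hσ2 : (0:ℝ) < σ^2 := by positivity
  set s : ℝ := Real.sqrt ε with hs_def
  have hs : 0 ≤ s := Real.sqrt_nonneg ε
  have hs2 : s^2 = ε := Real.sq_sqrt hε
  set l : ℝ := s / σ^2 with hl_def
  have hl : 0 ≤ l := by positivity
  have hls : l * σ^2 = s := div_mul_cancel₀ s (ne_of_gt hσ2)
  set a : ℝ := (n:ℝ) * σ^2 - 2*n*σ^2*s with ha_def
  set S : (Fin n → ℝ) → ℝ := fun x => ∑ i, (x i - μ i)^2 with hS_def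
  have hSmeas : Measurable S := by
    apply Finset.measurable_sum
    intro i _
    exact ((measurable_pi_apply i).sub measurable_const).pow_const 2
  have hSnonneg : ∀ x, 0 ≤ S x := fun x => Finset.sum_nonneg fun i _ => sq_nonneg _
  set G : (Fin n → ℝ) → ℝ := fun x => Real.exp (-(l * S x)) with hG_def
  have hGmeas : Measurable G := (hSmeas.const_mul l).neg.exp
  haveI : IsProbabilityMeasure (isoGaussian n μ σ) := by
    haveI : ∀ i : Fin n, IsProbabilityMeasure (gaussianReal (μ i) ⟨σ ^ 2, sq_nonneg σ⟩) :=
      fun i => instIsProbabilityMeasureGaussianReal _ _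
    unfold isoGaussian; infer_instance
  haveI : ∀ i : Fin n, SigmaFinite (gaussianReal (μ i) ⟨σ ^ 2, sq_nonneg σ⟩) :=
    fun i => by haveI := instIsProbabilityMeasureGaussianReal (μ i) ⟨σ ^ 2, sq_nonneg σ⟩; infer_instance
  -- integrability of G
  have hGle : ∀ x, G x ≤ 1 := by
    intro x
    rw [hG_def]
    apply Real.exp_le_one_iff.mpr
    simp only [neg_nonpos]
    exact mul_nonneg hl (hSnonneg x)
  have hGint : Integrable G (isoGaussian n μ σ) := by
    apply (integrable_const (1:ℝ)).mono' hGmeas.aestronglyMeasurable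
    filter_upwards with x
    rw [Real.norm_eq_abs, abs_of_pos (Real.exp_pos _)]
    exact hGle x
  -- value of ∫ G
  have hGval : ∫ x, G x ∂isoGaussian n μ σ = ((Real.sqrt (1 + 2*s))⁻¹)^n := by
    have hGprod : ∀ x : Fin n → ℝ, G x = ∏ i, Real.exp (-(l * (x i - μ i)^2)) := by
      intro x
      show Real.exp (-(l * ∑ i, (x i - μ i)^2)) = _
      rw [← Real.exp_sum]
      congr 1
      rw [Finset.mul_sum, ← Finset.sum_neg_distrib]
    calc ∫ x, G x ∂isoGaussian n μ σ
        = ∫ x : Fin n → ℝ, ∏ i, Real.exp (-(l * (x i - μ i)^2))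
            ∂Measure.pi (fun i => gaussianReal (μ i) ⟨σ^2, sq_nonneg σ⟩) := by
          rw [show isoGaussian n μ σ
              = Measure.pi (fun i => gaussianReal (μ i) ⟨σ^2, sq_nonneg σ⟩) from rfl]
          exact integral_congr_ae (Filter.Eventually.of_forall hGprod)
      _ = ∏ i : Fin n, ∫ y, Real.exp (-(l * (y - μ i)^2))
            ∂gaussianReal (μ i) ⟨σ^2, sq_nonneg σ⟩ :=
          pi_integral_prod (fun i => gaussianReal (μ i) ⟨σ^2, sq_nonneg σ⟩)
            (fun i y => Real.exp (-(l * (y - μ i)^2)))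
      _ = ((Real.sqrt (1 + 2*s))⁻¹)^n := by
          have h1 : ∀ i : Fin n, ∫ y, Real.exp (-(l * (y - μ i)^2))
              ∂gaussianReal (μ i) ⟨σ^2, sq_nonneg σ⟩ = (Real.sqrt (1 + 2*s))⁻¹ := by
            intro i
            rw [gauss_exp_integral (μ i) σ hσ l hl]
            rw [show (1:ℝ) + 2*l*σ^2 = 1 + 2*s by rw [mul_assoc, hls]]
          simp_rw [h1]
          simp
  -- Markov
  set c : ENNReal := ENNReal.ofReal (Real.exp (-(l * a))) with hc_def
  have hmarkov := mul_meas_ge_le_lintegral₀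
    (μ := isoGaussian n μ σ)
    (f := fun x => ENNReal.ofReal (G x)) (hGmeas.ennreal_ofReal).aemeasurable c
  have hsubset : {x : Fin n → ℝ | S x ≤ a} ⊆ {x | c ≤ ENNReal.ofReal (G x)} := by
    intro x hx
    simp only [Set.mem_setOf_eq] at hx ⊢
    rw [hc_def]
    apply ENNReal.ofReal_le_ofReal
    apply Real.exp_le_exp.mpr
    simp only [neg_le_neg_iff]
    exact mul_le_mul_of_nonneg_left hx hl
  have hmarkov2 : c * isoGaussian n μ σ {x | S x ≤ a}
      ≤ ∫⁻ x, ENNReal.ofReal (G x) ∂isoGaussian n μ σ :=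
    le_trans (mul_le_mul_right (measure_mono hsubset) c) hmarkov
  have hlin : ∫⁻ x, ENNReal.ofReal (G x) ∂isoGaussian n μ σ
      = ENNReal.ofReal (∫ x, G x ∂isoGaussian n μ σ) :=
    (ofReal_integral_eq_lintegral_ofReal hGint
      (Filter.Eventually.of_forall fun x => (Real.exp_pos _).le)).symm
  rw [hlin, hGval] at hmarkov2
  -- unwind
  have hstep : isoGaussian n μ σ {x | S x ≤ a}
      ≤ ENNReal.ofReal (Real.exp (l*a)) * ENNReal.ofReal (((Real.sqrt (1 + 2*s))⁻¹)^n) := by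
    have heq : isoGaussian n μ σ {x | S x ≤ a}
        = ENNReal.ofReal (Real.exp (l*a)) * (c * isoGaussian n μ σ {x | S x ≤ a}) := by
      rw [← mul_assoc, hc_def, ← ENNReal.ofReal_mul (Real.exp_nonneg _), ← Real.exp_add]
      simp
    rw [heq]
    exact mul_le_mul_right hmarkov2 _
  refine le_trans hstep ?_
  rw [← ENNReal.ofReal_mul (Real.exp_nonneg _)]
  apply ENNReal.ofReal_le_ofReal
  -- final real inequality
  have h12s : (0:ℝ) < 1 + 2*s := by positivity
  have hsq : (0:ℝ) < Real.sqrt (1 + 2*s) := Real.sqrt_pos.mpr h12s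
  have hla : l * a = n*s - 2*n*ε := by
    rw [ha_def, hl_def]
    field_simp
    rw [← hs2]
    ring
  have hq : Real.exp (s - ε) ≤ Real.sqrt (1 + 2*s) := by
    have h1 : Real.exp (2*s - (2*s)^2/2) ≤ 1 + 2*s := exp_quad_le (2*s) (by positivity)
    have h2 : Real.exp (2*(s - ε)) ≤ 1 + 2*s := by
      have : 2*(s-ε) = 2*s - (2*s)^2/2 := by rw [← hs2]; ring
      rwa [this]
    have h3 : Real.exp (s - ε) = Real.sqrt (Real.exp (2*(s-ε))) := by
      rw [two_mul, Real.exp_add, Real.sqrt_mul_self (Real.exp_nonneg _)]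
    rw [h3]
    exact Real.sqrt_le_sqrt h2
  have hpow : Real.exp ((n:ℝ)*(s-ε)) ≤ (Real.sqrt (1 + 2*s))^n := by
    rw [Real.exp_nat_mul]
    exact pow_le_pow_left₀ (Real.exp_nonneg _) hq n
  have hexp : Real.exp (l*a) = Real.exp ((n:ℝ)*(s-ε)) * Real.exp (-(n*ε)) := by
    rw [← Real.exp_add, hla]
    congr 1
    ring
  calc Real.exp (l*a) * ((Real.sqrt (1 + 2*s))⁻¹)^n
      = Real.exp ((n:ℝ)*(s-ε)) * ((Real.sqrt (1 + 2*s))⁻¹)^n * Real.exp (-(n*ε)) := by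
        rw [hexp]; ring
    _ ≤ (Real.sqrt (1 + 2*s))^n * ((Real.sqrt (1 + 2*s))⁻¹)^n * Real.exp (-(n*ε)) := by
        apply mul_le_mul_of_nonneg_right _ (Real.exp_nonneg _)
        exact mul_le_mul_of_nonneg_right hpow (by positivity)
    _ = Real.exp (-(n*ε)) := by
        rw [← mul_pow, mul_inv_cancel₀ (ne_of_gt hsq), one_pow, one_mul]
end

section
/- Let x be a random vector in ℝ^n whose coordinates are independent Gaussian random variables, each with mean μᵢ and variance σ² > 0 (i.e. x ~ N(μ, σ²·I)), set r = √n · σ, and for ε ∈ [0, 1/4] define ε_max = max{ 1 − √(1 − 2√ε), √(1 + 2√ε + 2ε) − 1 }. Then P( (1 − ε_max)·r ≤ ‖x − μ‖ ≤ (1 + ε_max)·r ) ≥ 1 − 2e^{−nε}; that is, with probability at least 1 − 2e^{−nε} the vector x lies within relative distance ε_max of the sphere of radius √n·σ centered at μ. -/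
open MeasureTheory ProbabilityTheory

open Real

lemma aux_log_le {t : ℝ} (ht : 1 ≤ t) : 2 * Real.log t ≤ t - t⁻¹ := by
  set f : ℝ → ℝ := fun y => y - y⁻¹ - 2 * Real.log y with hf
  have hmono : MonotoneOn f (Set.Ici 1) := by
    have hderiv : ∀ x ∈ interior (Set.Ici (1:ℝ)), 0 ≤ deriv f x := by
      rw [interior_Ici]
      intro x hx
      have hx0 : (0:ℝ) < x := lt_trans one_pos hx
      have h1 : HasDerivAt f (1 - (-(x^2)⁻¹) - 2 * x⁻¹) x := by
        exact ((hasDerivAt_id x).sub (hasDerivAt_inv hx0.ne')).sub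
          ((Real.hasDerivAt_log hx0.ne').const_mul 2)
      rw [h1.deriv]
      have : 1 - (-(x ^ 2)⁻¹) - 2 * x⁻¹ = (1 - x⁻¹)^2 := by
        field_simp; ring
      rw [this]; positivity
    apply monotoneOn_of_deriv_nonneg (convex_Ici 1) _ _ hderiv
    · apply ContinuousOn.sub (ContinuousOn.sub (continuousOn_id) ?_) ?_
      · exact continuousOn_inv₀.mono (fun x hx => ne_of_gt (lt_of_lt_of_le one_pos hx))
      · exact (Real.continuousOn_log.mono
          (fun x hx => ne_of_gt (lt_of_lt_of_le one_pos hx))).const_smul (2:ℝ) |>.congr (fun x _ => by simp [smul_eq_mul])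
    · rw [interior_Ici]
      intro x hx
      have hx0 : (0:ℝ) < x := lt_trans one_pos hx
      exact (((hasDerivAt_id x).sub (hasDerivAt_inv hx0.ne')).sub
        ((Real.hasDerivAt_log hx0.ne').const_mul 2)).differentiableAt.differentiableWithinAt
  have h0 : f 1 = 0 := by simp [hf]
  have := hmono (Set.self_mem_Ici) ht ht
  rw [h0] at this
  simp only [hf] at this
  linarith

lemma aux_log_ge {x : ℝ} (hx : 0 ≤ x) : x - x^2/2 ≤ Real.log (1+x) := by
  set f : ℝ → ℝ := fun y => Real.log (1+y) - y + y^2/2 with hf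
  have hmono : MonotoneOn f (Set.Ici 0) := by
    have hd : ∀ y : ℝ, 0 < 1 + y → HasDerivAt f ((1+y)⁻¹ - 1 + y) y := by
      intro y hy
      have h1 : HasDerivAt (fun z : ℝ => 1 + z) 1 y := by
        simpa using (hasDerivAt_id y).const_add 1
      have h2 : HasDerivAt (fun z : ℝ => Real.log (1+z)) ((1+y)⁻¹ * 1) y :=
        (Real.hasDerivAt_log hy.ne').comp y h1
      have h3 : HasDerivAt (fun z : ℝ => z^2/2) y y := by
        simpa using ((hasDerivAt_pow 2 y).div_const 2)
      have := (h2.sub (hasDerivAt_id y)).add h3; simp only [mul_one] at this; exact this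
    apply monotoneOn_of_deriv_nonneg (convex_Ici 0)
    · intro y hy
      exact ((hd y (by simp at hy; linarith)).continuousAt).continuousWithinAt
    · rw [interior_Ici]
      intro y hy
      exact (hd y (by linarith [Set.mem_Ioi.mp hy])).differentiableAt.differentiableWithinAt
    · rw [interior_Ici]
      intro y hy
      have hy0 : (0:ℝ) < y := hy
      rw [(hd y (by linarith)).deriv]
      have h1y : (0:ℝ) < 1 + y := by linarith
      have : (1+y)⁻¹ - 1 + y = y^2 / (1+y) := by field_simp; ring
      rw [this]; positivity
  have h0 : f 0 = 0 := by simp [hf]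
  have := hmono (Set.self_mem_Ici) hx hx
  rw [h0] at this
  simp only [hf] at this
  linarith

lemma lintegral_pi_prod : ∀ {n : ℕ} (m : Fin n → Measure ℝ), (∀ i, SigmaFinite (m i)) →
    ∀ (f : Fin n → ℝ → ENNReal), (∀ i, Measurable (f i)) →
    ∫⁻ x, ∏ i, f i (x i) ∂(Measure.pi m) = ∏ i, ∫⁻ y, f i y ∂(m i) := by
  intro n
  induction n with
  | zero =>
    intro m _ f hf
    simp [lintegral_const, MeasureTheory.Measure.pi_empty_univ]
  | succ n ih =>
    intro m hsf f hf
    haveI := hsf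
    calc ∫⁻ x, ∏ i, f i (x i) ∂(Measure.pi m)
        = ∫⁻ z : ℝ × (Fin n → ℝ),
            f 0 z.1 * ∏ i : Fin n, f (Fin.succ i) (z.2 i)
            ∂((m 0).prod (Measure.pi fun j => m (Fin.succ j))) := by
          have hmp := (measurePreserving_piFinSuccAbove m 0)
          simp only [Fin.zero_succAbove] at hmp
          rw [hmp.lintegral_map_equiv (fun z => f 0 z.1 * ∏ i : Fin n, f (Fin.succ i) (z.2 i))
            (MeasurableEquiv.piFinSuccAbove (fun _ => ℝ) 0)]
          congr 1 with x
          rw [Fin.prod_univ_succ]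
          simp [MeasurableEquiv.piFinSuccAbove, Fin.zero_succAbove, Fin.tail]
      _ = (∫⁻ y, f 0 y ∂(m 0)) * ∫⁻ x, ∏ i : Fin n, f (Fin.succ i) (x i)
            ∂(Measure.pi fun j => m (Fin.succ j)) := by
          exact lintegral_prod_mul (hf 0).aemeasurable
            (Finset.measurable_prod Finset.univ fun i _ =>
              (hf (Fin.succ i)).comp (measurable_pi_apply i)).aemeasurable
      _ = ∏ i, ∫⁻ y, f i y ∂(m i) := by
          rw [ih _ (fun j => hsf _) _ (fun j => hf _), Fin.prod_univ_succ]

lemma lintegral_exp_gaussian (m σ l : ℝ) (hσ : 0 < σ) (hl : 2 * l * σ ^ 2 < 1) :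
    ∫⁻ x, ENNReal.ofReal (Real.exp (l * (x - m) ^ 2)) ∂(gaussianReal m ⟨σ ^ 2, sq_nonneg σ⟩)
      = ENNReal.ofReal (Real.sqrt (1 - 2 * l * σ ^ 2))⁻¹ := by
  have hv : (⟨σ ^ 2, sq_nonneg σ⟩ : NNReal) ≠ 0 := by
    simp only [ne_eq, ← NNReal.coe_eq_zero]
    exact ne_of_gt (pow_pos hσ 2)
  set v : NNReal := ⟨σ ^ 2, sq_nonneg σ⟩ with hvdef
  -- reduce to mean zero
  have hmap : (gaussianReal m v).map (· + (-m)) = gaussianReal 0 v := by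
    rw [gaussianReal_map_add_const]; norm_num
  have hmeas : Measurable fun x : ℝ => ENNReal.ofReal (Real.exp (l * x ^ 2)) := by
    measurability
  have h1 : ∫⁻ x, ENNReal.ofReal (Real.exp (l * (x - m) ^ 2)) ∂(gaussianReal m v)
      = ∫⁻ x, ENNReal.ofReal (Real.exp (l * x ^ 2)) ∂(gaussianReal 0 v) := by
    rw [← hmap, lintegral_map hmeas (measurable_add_const (-m))]
    simp_rw [sub_eq_add_neg]
  rw [h1, gaussianReal_of_var_ne_zero 0 hv,
    lintegral_withDensity_eq_lintegral_mul _ (measurable_gaussianPDF 0 v) hmeas]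
  have hb : 0 < 1 / (2 * σ ^ 2) - l := by
    rw [sub_pos, lt_div_iff₀ (by positivity)]
    linarith
  set b : ℝ := 1 / (2 * σ ^ 2) - l with hbdef
  have h2 : (fun x : ℝ => (gaussianPDF 0 v * fun x : ℝ => ENNReal.ofReal (rexp (l * x ^ 2))) x)
      = fun x : ℝ => ENNReal.ofReal ((Real.sqrt (2 * π * σ ^ 2))⁻¹ * rexp (-b * x ^ 2)) := by
    funext x
    simp only [Pi.mul_apply, gaussianPDF, gaussianPDFReal]
    rw [← ENNReal.ofReal_mul (by positivity)]
    congr 1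
    have hcoe : ((v : ℝ)) = σ ^ 2 := rfl
    rw [mul_assoc, ← Real.exp_add, hcoe]
    congr 2
    rw [hbdef]; field_simp; ring
  rw [h2, ← ofReal_integral_eq_lintegral_ofReal]
  · rw [integral_const_mul, integral_gaussian]
    congr 1
    have h3 : (Real.sqrt (2 * π * σ ^ 2))⁻¹ = Real.sqrt (2 * π * σ ^ 2)⁻¹ := by
      rw [Real.sqrt_inv]
    rw [h3, ← Real.sqrt_mul (by positivity), ← Real.sqrt_inv]
    congr 1
    have hne : 1 - 2 * l * σ ^ 2 ≠ 0 := by linarith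
    have hπ : π ≠ 0 := Real.pi_ne_zero
    have hσ' : σ ^ 2 ≠ 0 := by positivity
    have hbne : b ≠ 0 := ne_of_gt hb
    rw [eq_comm, inv_eq_iff_eq_inv, eq_comm, mul_inv, inv_inv, div_eq_mul_inv, mul_inv, inv_inv]
    rw [hbdef]
    field_simp
  · exact (integrable_exp_neg_mul_sq hb).const_mul _
  · exact Filter.Eventually.of_forall fun x => by positivity

lemma measurable_Z {n : ℕ} (μ : Fin n → ℝ) :
    Measurable (fun x : Fin n → ℝ => ∑ i, (x i - μ i) ^ 2) := by
  apply Finset.measurable_sum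
  intro i _
  exact ((measurable_pi_apply i).sub measurable_const).pow_const 2

lemma lintegral_exp_sum {n : ℕ} (μ : Fin n → ℝ) (σ l : ℝ) (hσ : 0 < σ)
    (hl : 2 * l * σ ^ 2 < 1) :
    ∫⁻ x, ENNReal.ofReal (Real.exp (l * ∑ i, (x i - μ i) ^ 2)) ∂(isoGaussian n μ σ)
      = ENNReal.ofReal ((Real.sqrt (1 - 2 * l * σ ^ 2))⁻¹ ^ n) := by
  have h1 : ∀ x : Fin n → ℝ, ENNReal.ofReal (Real.exp (l * ∑ i, (x i - μ i) ^ 2))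
      = ∏ i, ENNReal.ofReal (Real.exp (l * (x i - μ i) ^ 2)) := by
    intro x
    rw [Finset.mul_sum, Real.exp_sum, ← ENNReal.ofReal_prod_of_nonneg]
    intro i _
    positivity
  simp_rw [h1]
  rw [isoGaussian]
  have h2 : (∫⁻ x : Fin n → ℝ, ∏ i, ENNReal.ofReal (Real.exp (l * (x i - μ i) ^ 2))
        ∂(Measure.pi fun i => gaussianReal (μ i) ⟨σ ^ 2, sq_nonneg σ⟩))
      = ∏ i, ∫⁻ y, ENNReal.ofReal (Real.exp (l * (y - μ i) ^ 2))
        ∂(gaussianReal (μ i) ⟨σ ^ 2, sq_nonneg σ⟩) :=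
    lintegral_pi_prod _ (fun i => by haveI := instIsProbabilityMeasureGaussianReal (μ i) ⟨σ ^ 2, sq_nonneg σ⟩; infer_instance)
      (fun i y => ENNReal.ofReal (Real.exp (l * (y - μ i) ^ 2))) (fun i => by measurability)
  rw [h2]
  simp_rw [fun i => lintegral_exp_gaussian (μ i) σ l hσ hl]
  rw [Finset.prod_const, Finset.card_univ, Fintype.card_fin,
    ENNReal.ofReal_pow (by positivity)]

lemma chernoff {n : ℕ} (μ : Fin n → ℝ) (σ l a : ℝ) (hσ : 0 < σ) (hl : 2 * l * σ ^ 2 < 1)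
    (S : Set (Fin n → ℝ))
    (hS : ∀ x ∈ S, Real.exp (l * a) ≤ Real.exp (l * ∑ i, (x i - μ i) ^ 2)) :
    isoGaussian n μ σ S
      ≤ ENNReal.ofReal (Real.exp (-(l * a)) * (Real.sqrt (1 - 2 * l * σ ^ 2))⁻¹ ^ n) := by
  set F : (Fin n → ℝ) → ENNReal :=
    fun x => ENNReal.ofReal (Real.exp (l * ∑ i, (x i - μ i) ^ 2)) with hF
  have hFm : AEMeasurable F (isoGaussian n μ σ) :=
    (ENNReal.measurable_ofReal.comp ((measurable_Z μ).const_mul l).exp).aemeasurable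
  have key := mul_meas_ge_le_lintegral₀ hFm (ENNReal.ofReal (Real.exp (l * a)))
  rw [lintegral_exp_sum μ σ l hσ hl] at key
  have hsub : S ⊆ {x | ENNReal.ofReal (Real.exp (l * a)) ≤ F x} := by
    intro x hx
    exact ENNReal.ofReal_le_ofReal (hS x hx)
  have h2 : isoGaussian n μ σ S ≤ isoGaussian n μ σ {x | ENNReal.ofReal (Real.exp (l * a)) ≤ F x} :=
    measure_mono hsub
  have he0 : ENNReal.ofReal (Real.exp (l * a)) ≠ 0 := by
    simp [ENNReal.ofReal_eq_zero, not_le, Real.exp_pos]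
  have hetop : ENNReal.ofReal (Real.exp (l * a)) ≠ ⊤ := ENNReal.ofReal_ne_top
  have h3 : isoGaussian n μ σ {x | ENNReal.ofReal (Real.exp (l * a)) ≤ F x}
      ≤ ENNReal.ofReal ((Real.sqrt (1 - 2 * l * σ ^ 2))⁻¹ ^ n) / ENNReal.ofReal (Real.exp (l * a)) := by
    rw [ENNReal.le_div_iff_mul_le (Or.inl he0) (Or.inl hetop), mul_comm]
    exact key
  refine le_trans (le_trans h2 h3) ?_
  rw [ENNReal.div_eq_inv_mul, ← ENNReal.ofReal_inv_of_pos (Real.exp_pos _), ← Real.exp_neg,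
    ← ENNReal.ofReal_mul (by positivity)]

lemma sqrt_half_bound {ε : ℝ} (hε0 : 0 ≤ ε) (hε4 : ε ≤ 1/4) : Real.sqrt ε ≤ 1/2 := by
  have h := Real.sqrt_le_sqrt hε4
  rwa [show (1/4:ℝ) = (1/2)^2 by norm_num, Real.sqrt_sq (by norm_num)] at h

lemma tail_up {n : ℕ} (μ : Fin n → ℝ) (σ : ℝ) (hσ : 0 < σ) {ε : ℝ} (hε0 : 0 < ε)
    (hε4 : ε ≤ 1/4) :
    isoGaussian n μ σ {x | n * σ ^ 2 * (1 + 2 * Real.sqrt ε + 2 * ε) ≤ ∑ i, (x i - μ i) ^ 2}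
      ≤ ENNReal.ofReal (Real.exp (-(n * ε))) := by
  set s : ℝ := Real.sqrt ε with hsdef
  have hs0 : 0 < s := Real.sqrt_pos.mpr hε0
  have hse : s ^ 2 = ε := Real.sq_sqrt hε0.le
  have h1p : (0:ℝ) < 1 + 2 * s := by linarith
  set l : ℝ := s / ((1 + 2 * s) * σ ^ 2) with hldef
  have hσ2 : (0:ℝ) < σ ^ 2 := by positivity
  have hlσ : 2 * l * σ ^ 2 = 2 * s / (1 + 2 * s) := by
    rw [hldef]; field_simp
  have hl : 2 * l * σ ^ 2 < 1 := by
    rw [hlσ, div_lt_one h1p]; linarith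
  have hc : 1 - 2 * l * σ ^ 2 = (1 + 2 * s)⁻¹ := by
    rw [hlσ]; field_simp; ring
  set a : ℝ := n * σ ^ 2 * (1 + 2 * s + 2 * ε) with hadef
  refine le_trans (chernoff μ σ l a hσ hl _ ?_) ?_
  · intro x hx
    rw [Real.exp_le_exp]
    exact mul_le_mul_of_nonneg_left hx (by positivity)
  · rw [hc, Real.sqrt_inv, inv_inv]
    apply ENNReal.ofReal_le_ofReal
    have hsq : Real.sqrt (1 + 2 * s) ^ n = Real.exp (n * (Real.log (1 + 2 * s) / 2)) := by
      rw [Real.exp_nat_mul, ← Real.log_sqrt h1p.le, Real.exp_log (Real.sqrt_pos.mpr h1p)]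
    rw [hsq, ← Real.exp_add, Real.exp_le_exp]
    have hla : l * a = (n:ℝ) * (s * (1 + 2 * s + 2 * ε)) / (1 + 2 * s) := by
      rw [hldef, hadef]; field_simp
    have hlog : Real.log (1 + 2 * s) ≤ (2 * s + 2 * s ^ 2) / (1 + 2 * s) := by
      have h := aux_log_le (show (1:ℝ) ≤ 1 + 2 * s by linarith)
      have h2 : (1 + 2 * s) - (1 + 2 * s)⁻¹ = 2 * ((2 * s + 2 * s ^ 2) / (1 + 2 * s)) := by
        field_simp; ring
      rw [h2] at h
      linarith
    have hn : (0:ℝ) ≤ (n:ℝ) := Nat.cast_nonneg n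
    have hmul : (n:ℝ) * (Real.log (1 + 2 * s) / 2)
        ≤ (n:ℝ) * ((2 * s + 2 * s ^ 2) / (1 + 2 * s) / 2) :=
      mul_le_mul_of_nonneg_left (by linarith) hn
    have key : -((n:ℝ) * (s * (1 + 2 * s + 2 * ε)) / (1 + 2 * s))
        + (n:ℝ) * ((2 * s + 2 * s ^ 2) / (1 + 2 * s) / 2) = -((n:ℝ) * ε) := by
      rw [← hse]; field_simp; ring
    rw [hla]
    linarith


lemma tail_low {n : ℕ} (μ : Fin n → ℝ) (σ : ℝ) (hσ : 0 < σ) {ε : ℝ} (hε0 : 0 < ε) :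
    isoGaussian n μ σ {x | ∑ i, (x i - μ i) ^ 2 ≤ n * σ ^ 2 * (1 - 2 * Real.sqrt ε)}
      ≤ ENNReal.ofReal (Real.exp (-(n * ε))) := by
  set s : ℝ := Real.sqrt ε with hsdef
  have hs0 : 0 < s := Real.sqrt_pos.mpr hε0
  have hse : s ^ 2 = ε := Real.sq_sqrt hε0.le
  have h1p : (0:ℝ) < 1 + 2 * s := by linarith
  have hσ2 : (0:ℝ) < σ ^ 2 := by positivity
  set l : ℝ := -s / σ ^ 2 with hldef
  have hlσ : 2 * l * σ ^ 2 = -(2 * s) := by rw [hldef]; field_simp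
  have hl : 2 * l * σ ^ 2 < 1 := by rw [hlσ]; linarith
  have hc : 1 - 2 * l * σ ^ 2 = 1 + 2 * s := by rw [hlσ]; ring
  set a : ℝ := n * σ ^ 2 * (1 - 2 * s) with hadef
  have hlneg : l ≤ 0 := by
    rw [hldef]
    apply div_nonpos_of_nonpos_of_nonneg <;> linarith
  refine le_trans (chernoff μ σ l a hσ hl _ ?_) ?_
  · intro x hx
    rw [Real.exp_le_exp]
    exact mul_le_mul_of_nonpos_left hx hlneg
  · rw [hc]
    apply ENNReal.ofReal_le_ofReal
    have hsq : (Real.sqrt (1 + 2 * s))⁻¹ ^ n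
        = Real.exp ((n:ℝ) * (-(Real.log (1 + 2 * s) / 2))) := by
      rw [Real.exp_nat_mul, ← Real.log_sqrt h1p.le, Real.exp_neg,
        Real.exp_log (Real.sqrt_pos.mpr h1p)]
    rw [hsq, ← Real.exp_add, Real.exp_le_exp]
    have hla : l * a = -((n:ℝ) * (s * (1 - 2 * s))) := by
      rw [hldef, hadef]; field_simp
    have hlog : 2 * s - 2 * s ^ 2 ≤ Real.log (1 + 2 * s) := by
      have h := aux_log_ge (show (0:ℝ) ≤ 2 * s by linarith)
      calc 2 * s - 2 * s ^ 2 = 2 * s - (2 * s) ^ 2 / 2 := by ring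
        _ ≤ Real.log (1 + 2 * s) := h
    have hn : (0:ℝ) ≤ (n:ℝ) := Nat.cast_nonneg n
    have hmul : (n:ℝ) * (-(Real.log (1 + 2 * s) / 2))
        ≤ (n:ℝ) * (-((2 * s - 2 * s ^ 2) / 2)) :=
      mul_le_mul_of_nonneg_left (by linarith) hn
    have key : (n:ℝ) * (s * (1 - 2 * s)) + (n:ℝ) * (-((2 * s - 2 * s ^ 2) / 2))
        = -((n:ℝ) * ε) := by
      rw [← hse]; ring
    rw [hla]
    linarith

/-- Concentration of an isotropic Gaussian near the sphere of radius `r = √n·σ`: for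
`ε ∈ [0, 1/4]` and `ε_max = max (1 - √(1 - 2√ε)) (√(1 + 2√ε + 2ε) - 1)`,
`P((1 - ε_max)·r ≤ ‖x - μ‖ ≤ (1 + ε_max)·r) ≥ 1 - 2e^(-nε)`. -/
theorem isoGaussian_sphere_concentration {n : ℕ} (μ : Fin n → ℝ) (σ : ℝ) (hσ : 0 < σ)
    (ε : ℝ) (hε : ε ∈ Set.Icc (0 : ℝ) (1 / 4)) :
    ENNReal.ofReal (1 - 2 * Real.exp (-(n * ε)))
      ≤ isoGaussian n μ σ
          {x | (1 - max (1 - Real.sqrt (1 - 2 * Real.sqrt ε))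
                    (Real.sqrt (1 + 2 * Real.sqrt ε + 2 * ε) - 1)) * (Real.sqrt n * σ)
                 ≤ Real.sqrt (∑ i, (x i - μ i) ^ 2) ∧
               Real.sqrt (∑ i, (x i - μ i) ^ 2)
                 ≤ (1 + max (1 - Real.sqrt (1 - 2 * Real.sqrt ε))
                    (Real.sqrt (1 + 2 * Real.sqrt ε + 2 * ε) - 1)) * (Real.sqrt n * σ)} := by

  obtain ⟨hε0, hε4⟩ := hε
  by_cases htriv : 1 - 2 * Real.exp (-(n * ε)) ≤ 0
  · rw [ENNReal.ofReal_eq_zero.mpr htriv]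
    exact zero_le
  push_neg at htriv
  have hεpos : 0 < ε := by
    rcases hε0.eq_or_lt with h | h
    · exfalso
      rw [← h] at htriv
      norm_num at htriv
    · exact h
  have hT1 := tail_low μ σ hσ hεpos
  have hT2 := tail_up μ σ hσ hεpos hε4
  set s : ℝ := Real.sqrt ε with hsdef
  have hs0 : 0 < s := Real.sqrt_pos.mpr hεpos
  have hs2 : s ≤ 1 / 2 := sqrt_half_bound hε0 hε4
  have h1m : (0:ℝ) ≤ 1 - 2 * s := by linarith
  have h1pe : (0:ℝ) ≤ 1 + 2 * s + 2 * ε := by linarith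
  set emax : ℝ := max (1 - Real.sqrt (1 - 2 * s)) (Real.sqrt (1 + 2 * s + 2 * ε) - 1) with hemax
  set r : ℝ := Real.sqrt n * σ with hrdef
  have hr : 0 ≤ r := by positivity
  set Z : (Fin n → ℝ) → ℝ := fun x => ∑ i, (x i - μ i) ^ 2 with hZ
  have hZ0 : ∀ x, 0 ≤ Z x := fun x => Finset.sum_nonneg fun i _ => sq_nonneg _
  set S : Set (Fin n → ℝ) :=
    {x | (1 - emax) * r ≤ Real.sqrt (Z x) ∧ Real.sqrt (Z x) ≤ (1 + emax) * r} with hS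
  have hlowr : Real.sqrt ((n:ℝ) * σ ^ 2 * (1 - 2 * s)) = Real.sqrt (1 - 2 * s) * r := by
    rw [hrdef, Real.sqrt_mul (by positivity), Real.sqrt_mul (Nat.cast_nonneg n),
      Real.sqrt_sq hσ.le]
    ring
  have huppr : Real.sqrt ((n:ℝ) * σ ^ 2 * (1 + 2 * s + 2 * ε))
      = Real.sqrt (1 + 2 * s + 2 * ε) * r := by
    rw [hrdef, Real.sqrt_mul (by positivity), Real.sqrt_mul (Nat.cast_nonneg n),
      Real.sqrt_sq hσ.le]
    ring
  have hsub : Sᶜ ⊆ {x | Z x ≤ (n:ℝ) * σ ^ 2 * (1 - 2 * s)}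
      ∪ {x | (n:ℝ) * σ ^ 2 * (1 + 2 * s + 2 * ε) ≤ Z x} := by
    intro x hx
    simp only [hS, Set.mem_compl_iff, Set.mem_setOf_eq, not_and_or, not_le] at hx
    rcases hx with hx | hx
    · left
      simp only [Set.mem_setOf_eq]
      by_contra hcon
      push_neg at hcon
      have h1 : Real.sqrt ((n:ℝ) * σ ^ 2 * (1 - 2 * s)) ≤ Real.sqrt (Z x) :=
        Real.sqrt_le_sqrt hcon.le
      have h2 : (1 - emax) * r ≤ Real.sqrt (1 - 2 * s) * r := by
        apply mul_le_mul_of_nonneg_right _ hr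
        have := le_max_left (1 - Real.sqrt (1 - 2 * s)) (Real.sqrt (1 + 2 * s + 2 * ε) - 1)
        rw [hemax]
        linarith
      rw [hlowr] at h1
      linarith
    · right
      simp only [Set.mem_setOf_eq]
      have h2 : Real.sqrt (1 + 2 * s + 2 * ε) * r ≤ (1 + emax) * r := by
        apply mul_le_mul_of_nonneg_right _ hr
        have := le_max_right (1 - Real.sqrt (1 - 2 * s)) (Real.sqrt (1 + 2 * s + 2 * ε) - 1)
        rw [hemax]
        linarith
      have h3 : Real.sqrt ((n:ℝ) * σ ^ 2 * (1 + 2 * s + 2 * ε)) < Real.sqrt (Z x) := by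
        rw [huppr]; linarith
      have h4 := Real.sqrt_le_sqrt (le_of_lt h3)
      calc (n:ℝ) * σ ^ 2 * (1 + 2 * s + 2 * ε)
          = Real.sqrt ((n:ℝ) * σ ^ 2 * (1 + 2 * s + 2 * ε)) ^ 2 := by
            rw [Real.sq_sqrt (by positivity)]
        _ ≤ Real.sqrt (Z x) ^ 2 := by
            apply pow_le_pow_left₀ (Real.sqrt_nonneg _) h3.le
        _ = Z x := Real.sq_sqrt (hZ0 x)
  haveI : IsProbabilityMeasure (isoGaussian n μ σ) := by
    unfold isoGaussian; haveI := fun i => instIsProbabilityMeasureGaussianReal (μ i) ⟨σ ^ 2, sq_nonneg σ⟩; infer_instance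
  have hunion : (1:ENNReal) ≤ isoGaussian n μ σ S
      + (ENNReal.ofReal (Real.exp (-(n * ε))) + ENNReal.ofReal (Real.exp (-(n * ε)))) := by
    calc (1:ENNReal) = isoGaussian n μ σ (S ∪ Sᶜ) := by
          rw [Set.union_compl_self]
          exact measure_univ.symm
      _ ≤ isoGaussian n μ σ S + isoGaussian n μ σ Sᶜ := measure_union_le _ _
      _ ≤ isoGaussian n μ σ S
          + (ENNReal.ofReal (Real.exp (-(n * ε))) + ENNReal.ofReal (Real.exp (-(n * ε)))) := by
          apply add_le_add_right
          calc isoGaussian n μ σ Sᶜ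
              ≤ isoGaussian n μ σ ({x | Z x ≤ (n:ℝ) * σ ^ 2 * (1 - 2 * s)}
                ∪ {x | (n:ℝ) * σ ^ 2 * (1 + 2 * s + 2 * ε) ≤ Z x}) := measure_mono hsub
            _ ≤ isoGaussian n μ σ {x | Z x ≤ (n:ℝ) * σ ^ 2 * (1 - 2 * s)}
                + isoGaussian n μ σ {x | (n:ℝ) * σ ^ 2 * (1 + 2 * s + 2 * ε) ≤ Z x} :=
                measure_union_le _ _
            _ ≤ _ := add_le_add hT1 hT2
  have heq : ENNReal.ofReal (1 - 2 * Real.exp (-(n * ε)))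
      = 1 - (ENNReal.ofReal (Real.exp (-(n * ε))) + ENNReal.ofReal (Real.exp (-(n * ε)))) := by
    rw [← ENNReal.ofReal_add (Real.exp_nonneg _) (Real.exp_nonneg _),
      show (2:ℝ) * Real.exp (-(n * ε)) = Real.exp (-(n * ε)) + Real.exp (-(n * ε)) by ring,
      ENNReal.ofReal_sub _ (by positivity), ENNReal.ofReal_one]
  rw [heq]
  exact tsub_le_iff_right.mpr hunion
end
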